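/- Let X be a T₅ topological space, n, m ∈ ℕ with n, m ≥ 1. If f ∈ u𝒮_n(X) and g ∈ u𝒮_m(X), then f + g ∈ u𝒮_{n+m}(X). -/

import Mathlib

open Topology ENNReal Filter Set

/-- Oscillation of `f` at `x`: inf over neighbourhoods `O ∋ x` of `sup_{ξ∈O} ρ(f x, f ξ)`. -/
noncomputable def oscAt {X Y : Type*} [TopologicalSpace X] [PseudoMetricSpace Y]
    (f : X → Y) (x : X) : ℝ≥0∞ :=
  ⨅ O ∈ 𝓝 x, ⨆ ξ ∈ O, edist (f x) (f ξ)

/-- Oscillation at `x` of the restriction of `f` to `D` (computed in the subspace `D`). -/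
noncomputable def oscWithinAt {X Y : Type*} [TopologicalSpace X] [PseudoMetricSpace Y]
    (f : X → Y) (D : Set X) (x : X) : ℝ≥0∞ :=
  ⨅ O ∈ 𝓝[D] x, ⨆ ξ ∈ O, edist (f x) (f ξ)

/-- `DEps f ε = {x : ω_f(x) ≥ ε}`. -/
noncomputable def DEps {X : Type*} [TopologicalSpace X] (f : X → ℝ) (ε : ℝ) : Set X :=
  {x | ENNReal.ofReal ε ≤ oscAt f x}

/-- Iterated ε-oscillation sets: `DIter f ε n = D_f^{n*ε}` (with `DIter f ε 0 = X`). -/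
noncomputable def DIter {X : Type*} [TopologicalSpace X] (f : X → ℝ) (ε : ℝ) : ℕ → Set X
  | 0 => Set.univ
  | n + 1 => {x ∈ DIter f ε n | ENNReal.ofReal ε ≤ oscWithinAt f (DIter f ε n) x}

/-- The class `u𝒮_n(X)`. -/
def uS {X : Type*} [TopologicalSpace X] (n : ℕ) (f : X → ℝ) : Prop :=
  ∀ ε : ℝ, 0 < ε → DIter f ε (n + 1) = ∅

/-- Iterated closed discontinuity sets `D_f^{n*0}` (with `DIter0 f 0 = X`). -/
def DIter0 {X : Type*} [TopologicalSpace X] (f : X → ℝ) : ℕ → Set X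
  | 0 => Set.univ
  | n + 1 => closure {x ∈ DIter0 f n | ¬ ContinuousWithinAt f (DIter0 f n) x}

/-- The class `𝒮_n(X)`. -/
def SClass {X : Type*} [TopologicalSpace X] (n : ℕ) (f : X → ℝ) : Prop :=
  DIter0 f (n + 1) = ∅

/-- `f` is `B₁**` : the restriction of `f` to its set of discontinuity points is continuous. -/
def B1ss {X Y : Type*} [TopologicalSpace X] [PseudoMetricSpace Y] (f : X → Y) : Prop :=
  ∀ x ∈ {x | ¬ ContinuousAt f x}, ContinuousWithinAt f {x | ¬ ContinuousAt f x} x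

section Aux
variable {X : Type*} [TopologicalSpace X]

lemma osc_eq (f : X → ℝ) (D : Set X) (x : X) :
    oscWithinAt f D x = ⨅ U ∈ 𝓝 x, ⨆ ξ ∈ U ∩ D, edist (f x) (f ξ) := by
  apply le_antisymm
  · refine le_iInf₂ fun U hU => ?_
    exact iInf₂_le (U ∩ D) (inter_mem_inf hU (mem_principal_self D))
  · refine le_iInf₂ fun O hO => ?_
    obtain ⟨U, hUopen, hxU, hsub⟩ := mem_nhdsWithin.mp hO
    refine le_trans (iInf₂_le U (hUopen.mem_nhds hxU)) ?_
    exact iSup₂_le fun ξ hξ => le_iSup₂ (f := fun ξ _ => edist (f x) (f ξ)) ξ (hsub hξ)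

lemma osc_mono (f : X → ℝ) {D D' : Set X} (h : D ⊆ D') (x : X) :
    oscWithinAt f D x ≤ oscWithinAt f D' x := by
  rw [osc_eq, osc_eq]
  exact iInf_mono fun U => iInf_mono fun _ =>
    iSup_le_iSup_of_subset (inter_subset_inter_right U h)

lemma osc_add (f g : X → ℝ) (D : Set X) (x : X) :
    oscWithinAt (f + g) D x ≤ oscWithinAt f D x + oscWithinAt g D x := by
  simp_rw [osc_eq, iInf_subtype']
  rw [ENNReal.iInf_add_iInf (f := fun U : {U // U ∈ 𝓝 x} => ⨆ ξ ∈ (U : Set X) ∩ D, edist (f x) (f ξ))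
      (g := fun U : {U // U ∈ 𝓝 x} => ⨆ ξ ∈ (U : Set X) ∩ D, edist (g x) (g ξ)) ?_]
  · refine iInf_mono fun U => iSup₂_le fun ξ hξ => ?_
    have h1 : edist ((f + g) x) ((f + g) ξ) ≤ edist (f x) (f ξ) + edist (g x) (g ξ) := by
      simpa using edist_add_add_le (f x) (g x) (f ξ) (g ξ)
    exact h1.trans (add_le_add (le_iSup₂ (f := fun ξ _ => edist (f x) (f ξ)) ξ hξ) (le_iSup₂ (f := fun ξ _ => edist (g x) (g ξ)) ξ hξ))
  · intro U V
    refine ⟨⟨U ∩ V, inter_mem U.2 V.2⟩, add_le_add ?_ ?_⟩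
    · exact iSup_le_iSup_of_subset (inter_subset_inter_left D (inter_subset_left))
    · exact iSup_le_iSup_of_subset (inter_subset_inter_left D (inter_subset_right))

lemma osc_union {f : X → ℝ} {A B : Set X} {x : X} {c : ℝ≥0∞}
    (hc : c ≤ oscWithinAt f (A ∪ B) x) :
    c ≤ oscWithinAt f A x ∨ c ≤ oscWithinAt f B x := by
  by_contra h
  push_neg at h
  obtain ⟨hA, hB⟩ := h
  rw [osc_eq] at hA hB
  obtain ⟨U, hU⟩ := iInf_lt_iff.mp hA
  obtain ⟨hUmem, hUlt⟩ := iInf_lt_iff.mp hU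
  obtain ⟨V, hV⟩ := iInf_lt_iff.mp hB
  obtain ⟨hVmem, hVlt⟩ := iInf_lt_iff.mp hV
  have : oscWithinAt f (A ∪ B) x < c := by
    rw [osc_eq]
    refine lt_of_le_of_lt (iInf₂_le (U ∩ V) (inter_mem hUmem hVmem)) ?_
    have : (U ∩ V) ∩ (A ∪ B) ⊆ (U ∩ A) ∪ (V ∩ B) := by
      rintro ξ ⟨⟨hξU, hξV⟩, hξAB⟩
      rcases hξAB with h | h
      · exact Or.inl ⟨hξU, h⟩
      · exact Or.inr ⟨hξV, h⟩
    refine lt_of_le_of_lt (iSup_le_iSup_of_subset this) ?_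
    calc ⨆ ξ ∈ (U ∩ A) ∪ (V ∩ B), edist (f x) (f ξ)
        = (⨆ ξ ∈ U ∩ A, edist (f x) (f ξ)) ⊔ ⨆ ξ ∈ V ∩ B, edist (f x) (f ξ) := by
          rw [iSup_union]
      _ < c := sup_lt_iff.mpr ⟨hUlt, hVlt⟩
  exact absurd hc (not_le.mpr this)

lemma osc_empty (f : X → ℝ) (x : X) : oscWithinAt f (∅ : Set X) x = 0 := by
  refine le_antisymm ?_ zero_le
  refine le_trans (iInf₂_le (∅ : Set X) ?_) ?_
  · simp [nhdsWithin_empty]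
  · simp

lemma osc_biUnion {f : X → ℝ} {S : ℕ → Set X} {x : X} {c : ℝ≥0∞} (hc0 : 0 < c) :
    ∀ N, c ≤ oscWithinAt f (⋃ i < N, S i) x → ∃ i < N, c ≤ oscWithinAt f (S i) x := by
  intro N
  induction N with
  | zero =>
    intro h
    simp only [Nat.not_lt_zero, iUnion_of_empty, iUnion_empty] at h
    rw [osc_empty] at h
    exact absurd (lt_of_lt_of_le hc0 h) (lt_irrefl 0)
  | succ N ih =>
    intro h
    rw [Set.biUnion_lt_succ] at h
    rcases osc_union h with h | h
    · obtain ⟨i, hi, hc⟩ := ih h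
      exact ⟨i, Nat.lt_succ_of_lt hi, hc⟩
    · exact ⟨N, Nat.lt_succ_self N, h⟩

lemma mem_closure_of_osc {f : X → ℝ} {S : Set X} {x : X} {c : ℝ≥0∞} (hc0 : 0 < c)
    (hc : c ≤ oscWithinAt f S x) : x ∈ closure S := by
  by_contra h
  rw [mem_closure_iff_nhdsWithin_neBot, Filter.not_neBot] at h
  have : oscWithinAt f S x ≤ 0 := by
    refine le_trans (iInf₂_le (∅ : Set X) ?_) ?_
    · rw [h]; exact Filter.mem_bot
    · simp
  exact absurd (lt_of_lt_of_le hc0 (hc.trans this)) (lt_irrefl 0)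

lemma osc_closure {f : X → ℝ} {D : Set X} {ε : ℝ} {x : X}
    (hx : x ∈ closure {y ∈ D | ENNReal.ofReal ε ≤ oscWithinAt f D y}) :
    ENNReal.ofReal (ε / 2) ≤ oscWithinAt f D x := by
  rcases le_or_gt ε 0 with hε | hε
  · rw [ENNReal.ofReal_of_nonpos (by linarith)]
    exact zero_le
  rw [osc_eq]
  refine le_iInf₂ fun U hU => ?_
  set s := ⨆ ξ ∈ U ∩ D, edist (f x) (f ξ) with hs
  obtain ⟨y, hyV, hyD, hyosc⟩ :
      ∃ y, y ∈ interior U ∧ y ∈ D ∧ ENNReal.ofReal ε ≤ oscWithinAt f D y := by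
    have hxint : x ∈ interior U := mem_interior_iff_mem_nhds.mpr hU
    obtain ⟨y, hy1, hy2⟩ := mem_closure_iff.mp hx (interior U) isOpen_interior hxint
    exact ⟨y, hy1, hy2.1, hy2.2⟩
  have hyU : y ∈ U := interior_subset hyV
  have key : ENNReal.ofReal ε ≤ s + s := by
    have h1 : ENNReal.ofReal ε ≤ ⨆ ξ ∈ interior U ∩ D, edist (f y) (f ξ) := by
      refine hyosc.trans ?_
      rw [osc_eq]
      exact iInf₂_le (interior U) (isOpen_interior.mem_nhds hyV)
    refine h1.trans (iSup₂_le fun ξ hξ => ?_)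
    have hξUD : ξ ∈ U ∩ D := ⟨interior_subset hξ.1, hξ.2⟩
    calc edist (f y) (f ξ) ≤ edist (f y) (f x) + edist (f x) (f ξ) := edist_triangle _ _ _
      _ ≤ s + s := by
        refine add_le_add ?_ (le_iSup₂ (f := fun ξ _ => edist (f x) (f ξ)) ξ hξUD)
        rw [edist_comm]
        exact le_iSup₂ (f := fun ξ _ => edist (f x) (f ξ)) y ⟨hyU, hyD⟩
  by_contra hlt
  push_neg at hlt
  have : s + s < ENNReal.ofReal (ε / 2) + ENNReal.ofReal (ε / 2) := ENNReal.add_lt_add hlt hlt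
  rw [← ENNReal.ofReal_add (by positivity) (by positivity)] at this
  have hε2 : ε / 2 + ε / 2 = ε := by ring
  rw [hε2] at this
  exact absurd key (not_le.mpr this)

lemma DIter_succ (f : X → ℝ) (ε : ℝ) (k : ℕ) :
    DIter f ε (k + 1) = {x ∈ DIter f ε k | ENNReal.ofReal ε ≤ oscWithinAt f (DIter f ε k) x} :=
  rfl

lemma DIter_anti_eps (f : X → ℝ) {δ ε : ℝ} (h : δ ≤ ε) :
    ∀ k, DIter f ε k ⊆ DIter f δ k := by
  intro k
  induction k with
  | zero => exact subset_rfl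
  | succ k ih =>
    rintro x ⟨hx1, hx2⟩
    refine ⟨ih hx1, ?_⟩
    calc ENNReal.ofReal δ ≤ ENNReal.ofReal ε := ENNReal.ofReal_le_ofReal h
      _ ≤ oscWithinAt f (DIter f ε k) x := hx2
      _ ≤ oscWithinAt f (DIter f δ k) x := osc_mono f ih x

lemma DIter_succ_subset (f : X → ℝ) (ε : ℝ) (k : ℕ) : DIter f ε (k + 1) ⊆ DIter f ε k :=
  fun _ hx => hx.1

lemma DIter_anti (f : X → ℝ) (ε : ℝ) {i j : ℕ} (h : i ≤ j) : DIter f ε j ⊆ DIter f ε i := by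
  induction j with
  | zero => rw [Nat.le_zero.mp h]
  | succ j ih =>
    rcases Nat.lt_or_ge i (j + 1) with h' | h'
    · exact (DIter_succ_subset f ε j).trans (ih (Nat.lt_succ_iff.mp h'))
    · rw [Nat.le_antisymm h h']

lemma closure_DIter (f : X → ℝ) {ε : ℝ} (hε : 0 < ε) :
    ∀ k, closure (DIter f ε k) ⊆ DIter f (ε / 2 ^ k) k := by
  intro k
  induction k with
  | zero => simp [DIter]
  | succ k ih =>
    intro x hx
    have h1 : ENNReal.ofReal (ε / 2) ≤ oscWithinAt f (DIter f ε k) x := osc_closure hx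
    have h2 : x ∈ DIter f (ε / 2 ^ k) k := ih (closure_mono (DIter_succ_subset f ε k) hx)
    have hle : ε / 2 ^ (k + 1) ≤ ε / 2 ^ k :=
      div_le_div_of_nonneg_left hε.le (by positivity)
        (pow_le_pow_right₀ (by norm_num) (Nat.le_succ k))
    have hle2 : ε / 2 ^ (k + 1) ≤ ε / 2 := by
      apply div_le_div_of_nonneg_left hε.le (by norm_num)
      calc (2:ℝ) = 2 ^ 1 := (pow_one 2).symm
        _ ≤ 2 ^ (k + 1) := pow_le_pow_right₀ (by norm_num) (Nat.le_add_left 1 k)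
    have hleε : ε / 2 ^ (k + 1) ≤ ε := by
      calc ε / 2 ^ (k + 1) ≤ ε / 2 := hle2
        _ ≤ ε := by linarith
    refine ⟨DIter_anti_eps f hle _ h2, ?_⟩
    calc ENNReal.ofReal (ε / 2 ^ (k + 1)) ≤ ENNReal.ofReal (ε / 2) :=
          ENNReal.ofReal_le_ofReal hle2
      _ ≤ oscWithinAt f (DIter f ε k) x := h1
      _ ≤ oscWithinAt f (DIter f (ε / 2 ^ (k + 1)) k) x :=
          osc_mono f (DIter_anti_eps f hleε k) x

lemma main_lemma (f g : X → ℝ) {ε : ℝ} (hε : 0 < ε) (k : ℕ) :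
    ∃ δ : ℝ, 0 < δ ∧ ∀ x ∈ DIter (f + g) ε k,
      ∃ i j, i + j = k ∧ x ∈ DIter f δ i ∧ x ∈ DIter g δ j := by
  induction k with
  | zero =>
    refine ⟨ε, hε, fun x _ => ⟨0, 0, rfl, ?_, ?_⟩⟩ <;> simp [DIter]
  | succ k ih =>
    obtain ⟨δ, hδ, H⟩ := ih
    refine ⟨min (δ / 2 ^ k) (ε / 2), lt_min (by positivity) (by positivity), ?_⟩
    set δ' := min (δ / 2 ^ k) (ε / 2) with hδ'def
    have hδ'δ : δ' ≤ δ := by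
      refine (min_le_left _ _).trans (div_le_self hδ.le ?_)
      exact one_le_pow₀ (by norm_num)
    have hδ'ε2 : δ' ≤ ε / 2 := min_le_right _ _
    have hδ'i : ∀ i ≤ k, δ' ≤ δ / 2 ^ i := by
      intro i hi
      refine (min_le_left _ _).trans ?_
      exact div_le_div_of_nonneg_left hδ.le (by positivity)
        (pow_le_pow_right₀ (by norm_num) hi)
    rintro x ⟨hxk, hxosc⟩
    have hsplit : ENNReal.ofReal (ε / 2) ≤ oscWithinAt f (DIter (f + g) ε k) x ∨
        ENNReal.ofReal (ε / 2) ≤ oscWithinAt g (DIter (f + g) ε k) x := by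
      by_contra hcon
      push_neg at hcon
      have hlt := ENNReal.add_lt_add hcon.1 hcon.2
      rw [← ENNReal.ofReal_add (by positivity) (by positivity)] at hlt
      have h22 : ε / 2 + ε / 2 = ε := by ring
      rw [h22] at hlt
      exact absurd (hxosc.trans (osc_add f g _ x)) (not_le.mpr hlt)
    set S : ℕ → Set X := fun i => DIter f δ i ∩ DIter g δ (k - i) with hS
    have hsub : DIter (f + g) ε k ⊆ ⋃ i < k + 1, S i := by
      intro y hy
      obtain ⟨i, j, hij, hyf, hyg⟩ := H y hy
      refine mem_biUnion (show i < k + 1 by omega) ?_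
      have hjk : j = k - i := by omega
      exact ⟨hyf, hjk ▸ hyg⟩
    have hε2pos : (0 : ℝ≥0∞) < ENNReal.ofReal (ε / 2) := ENNReal.ofReal_pos.mpr (by positivity)
    have hclosS : ∀ i ≤ k, x ∈ closure (S i) → x ∈ DIter f δ' i ∧ x ∈ DIter g δ' (k - i) := by
      intro i hik hxc
      constructor
      · have : x ∈ closure (DIter f δ i) := closure_mono inter_subset_left hxc
        exact DIter_anti_eps f (hδ'i i hik) i (closure_DIter f hδ i this)
      · have : x ∈ closure (DIter g δ (k - i)) := closure_mono inter_subset_right hxc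
        refine DIter_anti_eps g ?_ _ (closure_DIter g hδ (k - i) this)
        exact hδ'i (k - i) (Nat.sub_le k i)
    rcases hsplit with hbig | hbig
    · -- f case
      have h1 : ENNReal.ofReal (ε / 2) ≤ oscWithinAt f (⋃ i < k + 1, S i) x :=
        hbig.trans (osc_mono f hsub x)
      obtain ⟨i, hik1, hSbig⟩ := osc_biUnion hε2pos (k + 1) h1
      have hik : i ≤ k := by omega
      obtain ⟨hxF, hxG⟩ := hclosS i hik (mem_closure_of_osc hε2pos hSbig)
      refine ⟨i + 1, k - i, by omega, ⟨hxF, ?_⟩, hxG⟩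
      calc ENNReal.ofReal δ' ≤ ENNReal.ofReal (ε / 2) := ENNReal.ofReal_le_ofReal hδ'ε2
        _ ≤ oscWithinAt f (S i) x := hSbig
        _ ≤ oscWithinAt f (DIter f δ' i) x :=
            osc_mono f (inter_subset_left.trans (DIter_anti_eps f hδ'δ i)) x
    · -- g case
      have h1 : ENNReal.ofReal (ε / 2) ≤ oscWithinAt g (⋃ i < k + 1, S i) x :=
        hbig.trans (osc_mono g hsub x)
      obtain ⟨i, hik1, hSbig⟩ := osc_biUnion hε2pos (k + 1) h1
      have hik : i ≤ k := by omega
      obtain ⟨hxF, hxG⟩ := hclosS i hik (mem_closure_of_osc hε2pos hSbig)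
      refine ⟨i, (k - i) + 1, by omega, hxF, ⟨hxG, ?_⟩⟩
      calc ENNReal.ofReal δ' ≤ ENNReal.ofReal (ε / 2) := ENNReal.ofReal_le_ofReal hδ'ε2
        _ ≤ oscWithinAt g (S i) x := hSbig
        _ ≤ oscWithinAt g (DIter g δ' (k - i)) x :=
            osc_mono g (inter_subset_right.trans (DIter_anti_eps g hδ'δ (k - i))) x


end Aux

theorem stmt_12 {X : Type*} [TopologicalSpace X] [T5Space X] (n m : ℕ)
    (hn : 1 ≤ n) (hm : 1 ≤ m) (f g : X → ℝ) (hf : uS n f) (hg : uS m g) :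
    uS (n + m) (f + g) := by
  intro ε hε
  obtain ⟨δ, hδ, H⟩ := main_lemma f g hε (n + m + 1)
  rw [eq_empty_iff_forall_notMem]
  intro x hx
  obtain ⟨i, j, hij, hxf, hxg⟩ := H x hx
  rcases Nat.lt_or_ge i (n + 1) with h | h
  · have hj : m + 1 ≤ j := by omega
    have : x ∈ DIter g δ (m + 1) := DIter_anti g δ hj hxg
    rw [hg δ hδ] at this
    exact this
  · have : x ∈ DIter f δ (n + 1) := DIter_anti f δ h hxf
    rw [hf δ hδ] at this
    exact this
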